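/- Let (S,·) and (T,·) be semigroups, let φ : S → T be a semigroup homomorphism, and let A ⊆ S. If A is piecewise syndetic in S and the image φ(S) is piecewise syndetic in T, then φ(A) is piecewise syndetic in T. -/
import Mathlib


/-- `A` is thick in a (multiplicative) semigroup. -/
def MulThick {T : Type*} [Semigroup T] (A : Set T) : Prop :=
  ∀ E : Finset T, E.Nonempty → ∃ x : T, ∀ e ∈ E, e * x ∈ A

/-- `A` is piecewise syndetic in a (multiplicative) semigroup. -/
def MulPiecewiseSyndetic {T : Type*} [Semigroup T] (A : Set T) : Prop :=
  ∃ G : Finset T, G.Nonempty ∧ MulThick {s : T | ∃ g ∈ G, g * s ∈ A}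

/-- If `φ : S → T` is a semigroup homomorphism, `A ⊆ S` is piecewise syndetic in `S`,
and `φ(S)` is piecewise syndetic in `T`, then `φ(A)` is piecewise syndetic in `T`. -/
theorem stmt7 {S T : Type*} [Semigroup S] [Semigroup T] (φ : S → T)
    (hφ : ∀ a b : S, φ (a * b) = φ a * φ b) (A : Set S)
    (hA : MulPiecewiseSyndetic A) (hrange : MulPiecewiseSyndetic (Set.range φ)) :
    MulPiecewiseSyndetic (φ '' A) := by
  classical
  obtain ⟨G, hGne, hGthick⟩ := hA
  obtain ⟨H, hHne, hHthick⟩ := hrange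
  open Pointwise in
  refine ⟨G.image φ * H, Finset.Nonempty.mul (hGne.image φ) hHne, ?_⟩
  intro E hEne
  obtain ⟨y, hy⟩ := hHthick E hEne
  choose h hhH s hs using fun e (he : e ∈ E) => hy e he
  -- hs : φ (s e he) = h e he * (e * y)
  set F : Finset S := E.attach.image (fun e => s e.1 e.2) with hF
  have hFne : F.Nonempty := (Finset.attach_nonempty_iff.mpr hEne).image _
  obtain ⟨x, hx⟩ := hGthick F hFne
  refine ⟨y * φ x, fun e he => ?_⟩
  obtain ⟨g, hgG, hg⟩ := hx (s e he) (Finset.mem_image.mpr ⟨⟨e, he⟩, Finset.mem_attach _ _, rfl⟩)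
  refine ⟨φ g * h e he, Finset.mul_mem_mul (Finset.mem_image_of_mem φ hgG) (hhH e he), ?_⟩
  refine ⟨g * (s e he * x), hg, ?_⟩
  rw [hφ, hφ, hs e he]
  simp only [mul_assoc]
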